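/- Let n ≥ 2 and let M = [m_{ij}] be an n×n real B-Nekrasov matrix with decomposition M = B⁺ + C, where B⁺ = [b_{ij}]. Then for every diagonal matrix D = diag(d_1,…,d_n) with 0 ≤ d_i ≤ 1 for all i, the matrix I − D + DM is invertible and ‖(I − D + DM)^{-1}‖_∞ ≤ max_{1 ≤ i ≤ n} (n − 1) η_i(B⁺)/min{b_{ii} − h_i(B⁺), 1}. -/

import Mathlib

open Finset

noncomputable def nekH {n : ℕ} {𝕜 : Type*} [RCLike 𝕜] (A : Matrix (Fin n) (Fin n) 𝕜) : Fin n → ℝ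
  | i =>
    (∑ j : Fin n, if h : j < i then ‖A i j‖ / ‖A j j‖ * nekH A j else 0)
      + ∑ j : Fin n, if i < j then ‖A i j‖ else 0
termination_by i => i.val
decreasing_by exact h

def IsNekrasov {n : ℕ} {𝕜 : Type*} [RCLike 𝕜] (A : Matrix (Fin n) (Fin n) 𝕜) : Prop :=
  ∀ i, nekH A i < ‖A i i‖

noncomputable def nekZ {n : ℕ} {𝕜 : Type*} [RCLike 𝕜] (A : Matrix (Fin n) (Fin n) 𝕜) : Fin n → ℝ
  | i => (∑ j : Fin n, if h : j < i then ‖A i j‖ / ‖A j j‖ * nekZ A j else 0) + 1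
termination_by i => i.val
decreasing_by exact h

noncomputable def nekEta {n : ℕ} {𝕜 : Type*} [RCLike 𝕜] (M : Matrix (Fin n) (Fin n) 𝕜) : Fin n → ℝ
  | i => (∑ j : Fin n, if h : j < i then ‖M i j‖ / min ‖M j j‖ 1 * nekEta M j else 0) + 1
termination_by i => i.val
decreasing_by exact h

noncomputable def linftyNorm {n : ℕ} {𝕜 : Type*} [RCLike 𝕜] (A : Matrix (Fin n) (Fin n) 𝕜) : ℝ :=
  ⨆ i, ∑ j, ‖A i j‖

noncomputable def rPlus {n : ℕ} (M : Matrix (Fin n) (Fin n) ℝ) (i : Fin n) : ℝ :=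
  Finset.fold max 0 (fun j => M i j) (Finset.univ.erase i)

noncomputable def BPlus {n : ℕ} (M : Matrix (Fin n) (Fin n) ℝ) : Matrix (Fin n) (Fin n) ℝ :=
  Matrix.of fun i j => M i j - rPlus M i

def IsBNekrasov {n : ℕ} (M : Matrix (Fin n) (Fin n) ℝ) : Prop :=
  IsNekrasov (BPlus M) ∧ ∀ i, 0 < BPlus M i i

def IsLCPSolution {n : ℕ} (M : Matrix (Fin n) (Fin n) ℝ) (q x : Fin n → ℝ) : Prop :=
  (∀ i, 0 ≤ x i) ∧ (∀ i, 0 ≤ (M.mulVec x + q) i) ∧ ∑ i, (M.mulVec x + q) i * x i = 0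

def IsPMatrix {n : ℕ} (M : Matrix (Fin n) (Fin n) ℝ) : Prop :=
  ∀ S : Finset (Fin n), 0 < (M.submatrix (fun i : S => (i : Fin n)) (fun j : S => (j : Fin n))).det


section Helpers

variable {n : ℕ}

lemma finStrong {P : Fin n → Prop} (h : ∀ i, (∀ j, j < i → P j) → P i) : ∀ i, P i := by
  have H : ∀ k, ∀ i : Fin n, i.val < k → P i := by
    intro k
    induction k with
    | zero => intro i hi; omega
    | succ k ih =>
      intro i _
      exact h i fun j hj => ih j (by have := Fin.lt_def.mp hj; omega)
  exact fun i => H (i.val + 1) i (by omega)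

lemma nekH_nonneg (A : Matrix (Fin n) (Fin n) ℝ) : ∀ i, 0 ≤ nekH A i := by
  apply finStrong
  intro i ih
  rw [nekH]
  refine add_nonneg (Finset.sum_nonneg fun j _ => ?_) (Finset.sum_nonneg fun j _ => ?_)
  · split
    · exact mul_nonneg (div_nonneg (norm_nonneg _) (norm_nonneg _)) (ih j ‹_›)
    · exact le_refl 0
  · split
    · exact norm_nonneg _
    · exact le_refl 0

lemma one_le_nekZ (A : Matrix (Fin n) (Fin n) ℝ) : ∀ i, 1 ≤ nekZ A i := by
  apply finStrong
  intro i ih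
  rw [nekZ]
  refine le_add_of_nonneg_left (Finset.sum_nonneg fun j _ => ?_)
  split
  · exact mul_nonneg (div_nonneg (norm_nonneg _) (norm_nonneg _))
      (le_trans zero_le_one (ih j ‹_›))
  · exact le_refl 0

lemma one_le_nekEta (A : Matrix (Fin n) (Fin n) ℝ) : ∀ i, 1 ≤ nekEta A i := by
  apply finStrong
  intro i ih
  rw [nekEta]
  refine le_add_of_nonneg_left (Finset.sum_nonneg fun j _ => ?_)
  split
  · exact mul_nonneg (div_nonneg (norm_nonneg _) (le_min (norm_nonneg _) zero_le_one))
      (le_trans zero_le_one (ih j ‹_›))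
  · exact le_refl 0

/-- The matrix `I - D + D b`. -/
noncomputable def ADM (b : Matrix (Fin n) (Fin n) ℝ) (d : Fin n → ℝ) :
    Matrix (Fin n) (Fin n) ℝ :=
  Matrix.of fun i j => (if i = j then 1 - d i else 0) + d i * b i j

lemma ADM_off (b : Matrix (Fin n) (Fin n) ℝ) (d : Fin n → ℝ) {i j : Fin n} (h : i ≠ j) :
    ADM b d i j = d i * b i j := by
  simp [ADM, h]

lemma ADM_diag (b : Matrix (Fin n) (Fin n) ℝ) (d : Fin n → ℝ) (i : Fin n) :
    ADM b d i i = 1 - d i + d i * b i i := by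
  simp [ADM]

lemma ADM_diag_pos (b : Matrix (Fin n) (Fin n) ℝ) (d : Fin n → ℝ)
    (hd : ∀ i, 0 ≤ d i ∧ d i ≤ 1) (hb : ∀ i, 0 < b i i) (i : Fin n) :
    0 < ADM b d i i := by
  rw [ADM_diag]
  rcases le_total (b i i) 1 with h | h
  · nlinarith [(hd i).1, (hd i).2, hb i]
  · nlinarith [(hd i).1, (hd i).2, hb i]

lemma norm_ADM_off (b : Matrix (Fin n) (Fin n) ℝ) (d : Fin n → ℝ)
    (hd : ∀ i, 0 ≤ d i ∧ d i ≤ 1) {i j : Fin n} (h : i ≠ j) :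
    ‖ADM b d i j‖ = d i * ‖b i j‖ := by
  rw [ADM_off b d h, Real.norm_eq_abs, Real.norm_eq_abs, abs_mul, abs_of_nonneg (hd i).1]

lemma norm_ADM_diag (b : Matrix (Fin n) (Fin n) ℝ) (d : Fin n → ℝ)
    (hd : ∀ i, 0 ≤ d i ∧ d i ≤ 1) (hb : ∀ i, 0 < b i i) (i : Fin n) :
    ‖ADM b d i i‖ = ADM b d i i := by
  rw [Real.norm_eq_abs, abs_of_pos (ADM_diag_pos b d hd hb i)]

lemma nekH_ADM_le (b : Matrix (Fin n) (Fin n) ℝ) (d : Fin n → ℝ)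
    (hd : ∀ i, 0 ≤ d i ∧ d i ≤ 1) (hb : ∀ i, 0 < b i i) :
    ∀ i, nekH (ADM b d) i ≤ d i * nekH b i := by
  apply finStrong
  intro i ih
  rw [nekH]
  conv_rhs => rw [nekH]
  rw [mul_add, Finset.mul_sum, Finset.mul_sum]
  refine add_le_add (Finset.sum_le_sum fun j _ => ?_) (Finset.sum_le_sum fun j _ => ?_)
  · by_cases hj : j < i
    · have hne : i ≠ j := fun h => absurd hj (h ▸ lt_irrefl _)
      have hAjj : 0 < ADM b d j j := ADM_diag_pos b d hd hb j
      have key : nekH (ADM b d) j / ADM b d j j ≤ nekH b j / b j j := by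
        rw [div_le_div_iff₀ hAjj (hb j)]
        have h1 : nekH (ADM b d) j ≤ d j * nekH b j := ih j hj
        have h2 := nekH_nonneg b j
        rw [ADM_diag]
        nlinarith [mul_le_mul_of_nonneg_right h1 (hb j).le,
          mul_nonneg (sub_nonneg.mpr (hd j).2) h2]
      simp only [hj, dite_true, mul_dite, mul_zero, dif_pos]
      have e1 : ‖ADM b d i j‖ / ‖ADM b d j j‖ * nekH (ADM b d) j
          = (d i * ‖b i j‖) * (nekH (ADM b d) j / ADM b d j j) := by
        rw [norm_ADM_off b d hd hne, norm_ADM_diag b d hd hb]; ring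
      have e2 : d i * (‖b i j‖ / ‖b j j‖ * nekH b j)
          = (d i * ‖b i j‖) * (nekH b j / b j j) := by
        rw [Real.norm_eq_abs (b j j), abs_of_pos (hb j)]; ring
      rw [e1, e2]
      exact mul_le_mul_of_nonneg_left key (mul_nonneg (hd i).1 (norm_nonneg _))
    · simp [hj]
  · by_cases hj : i < j
    · have hne : i ≠ j := fun h => absurd hj (h ▸ lt_irrefl _)
      simp only [hj, if_true]
      exact le_of_eq (norm_ADM_off b d hd hne)
    · simp [hj]

lemma nekZ_ADM_le (b : Matrix (Fin n) (Fin n) ℝ) (d : Fin n → ℝ)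
    (hd : ∀ i, 0 ≤ d i ∧ d i ≤ 1) (hb : ∀ i, 0 < b i i) :
    ∀ i, nekZ (ADM b d) i ≤ nekEta b i := by
  apply finStrong
  intro i ih
  rw [nekZ]
  conv_rhs => rw [nekEta]
  refine add_le_add_left (Finset.sum_le_sum fun j _ => ?_) 1
  by_cases hj : j < i
  · have hne : i ≠ j := fun h => absurd hj (h ▸ lt_irrefl _)
    have hAjj : 0 < ADM b d j j := ADM_diag_pos b d hd hb j
    have hmin : 0 < min ‖b j j‖ 1 :=
      lt_min (by rw [Real.norm_eq_abs]; exact abs_pos.mpr (hb j).ne') zero_lt_one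
    have hminle : min ‖b j j‖ 1 ≤ ADM b d j j := by
      rw [Real.norm_eq_abs, abs_of_pos (hb j), ADM_diag]
      rcases le_total (b j j) 1 with h | h
      · rw [min_eq_left h]; nlinarith [(hd j).1, (hd j).2]
      · rw [min_eq_right h]; nlinarith [(hd j).1, (hd j).2]
    have key : nekZ (ADM b d) j / ADM b d j j ≤ nekEta b j / min ‖b j j‖ 1 :=
      div_le_div₀ (le_trans zero_le_one (one_le_nekEta b j)) (ih j hj) hmin hminle
    simp only [hj, dif_pos]
    calc ‖ADM b d i j‖ / ‖ADM b d j j‖ * nekZ (ADM b d) j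
        = ‖ADM b d i j‖ * (nekZ (ADM b d) j / ADM b d j j) := by
          rw [norm_ADM_diag b d hd hb]; ring
      _ ≤ ‖b i j‖ * (nekEta b j / min ‖b j j‖ 1) := by
          refine mul_le_mul ?_ key ?_ (norm_nonneg _)
          · rw [norm_ADM_off b d hd hne]
            nlinarith [(hd i).2, norm_nonneg (b i j)]
          · exact div_nonneg (le_trans zero_le_one (one_le_nekZ _ j)) hAjj.le
      _ = ‖b i j‖ / min ‖b j j‖ 1 * nekEta b j := by ring
  · simp [hj]

lemma gap_ADM (b : Matrix (Fin n) (Fin n) ℝ) (d : Fin n → ℝ)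
    (hd : ∀ i, 0 ≤ d i ∧ d i ≤ 1) (hb : ∀ i, 0 < b i i)
    (hNek : ∀ i, nekH b i < b i i) (i : Fin n) :
    min (b i i - nekH b i) 1 ≤ ADM b d i i - nekH (ADM b d) i := by
  have h1 : nekH (ADM b d) i ≤ d i * nekH b i := nekH_ADM_le b d hd hb i
  rw [ADM_diag]
  rcases le_total (b i i - nekH b i) 1 with h | h
  · rw [min_eq_left h]
    nlinarith [(hd i).1, (hd i).2, hNek i]
  · rw [min_eq_right h]
    nlinarith [(hd i).1, (hd i).2, hNek i]

end Helpers
section SDD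

open Finset
variable {n : ℕ}

lemma sdd_bound (B : Matrix (Fin n) (Fin n) ℝ) (ε : ℝ) (hε : 0 < ε)
    (hSDD : ∀ i, (∑ j ∈ Finset.univ.erase i, ‖B i j‖) + ε ≤ B i i)
    (x : Fin n → ℝ) (c : ℝ) (hc : ∀ k, ‖B.mulVec x k‖ ≤ c) (i : Fin n) :
    ε * ‖x i‖ ≤ c := by
  obtain ⟨k, -, hk⟩ := Finset.exists_max_image Finset.univ (fun j => ‖x j‖)
    ⟨i, Finset.mem_univ i⟩
  have expand : B.mulVec x k = B k k * x k + ∑ j ∈ Finset.univ.erase k, B k j * x j := by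
    rw [show B.mulVec x k = ∑ j, B k j * x j from by simp [Matrix.mulVec, dotProduct]]
    exact (Finset.add_sum_erase _ _ (Finset.mem_univ k)).symm
  set S := ∑ j ∈ Finset.univ.erase k, ‖B k j‖ with hS
  have hdd : S + ε ≤ B k k := hSDD k
  have hxk : ‖x i‖ ≤ ‖x k‖ := hk i (Finset.mem_univ i)
  have hBkk : 0 < B k k := by
    have : (0:ℝ) ≤ S := Finset.sum_nonneg fun j _ => norm_nonneg _
    linarith
  have h2 : B k k * ‖x k‖ ≤ c + S * ‖x k‖ := by
    have e : B k k * x k = B.mulVec x k - ∑ j ∈ Finset.univ.erase k, B k j * x j := by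
      rw [expand]; ring
    calc B k k * ‖x k‖ = ‖B k k * x k‖ := by
          rw [Real.norm_eq_abs (B k k * x k), abs_mul, abs_of_pos hBkk, Real.norm_eq_abs]
      _ ≤ ‖B.mulVec x k‖ + ‖∑ j ∈ Finset.univ.erase k, B k j * x j‖ := by
          rw [e]; exact norm_sub_le _ _
      _ ≤ c + S * ‖x k‖ := by
          refine add_le_add (hc k) ?_
          refine le_trans (norm_sum_le _ _) ?_
          rw [Finset.sum_mul]
          refine Finset.sum_le_sum fun j _ => ?_
          rw [norm_mul]
          exact mul_le_mul_of_nonneg_left (hk j (Finset.mem_univ j)) (norm_nonneg _)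
  nlinarith [mul_le_mul_of_nonneg_right hdd (norm_nonneg (x k)),
    mul_le_mul_of_nonneg_left hxk hε.le]

lemma sdd_det_ne_zero (B : Matrix (Fin n) (Fin n) ℝ) (ε : ℝ) (hε : 0 < ε)
    (hSDD : ∀ i, (∑ j ∈ Finset.univ.erase i, ‖B i j‖) + ε ≤ B i i) :
    B.det ≠ 0 := by
  intro h
  obtain ⟨v, hv, hveq⟩ := Matrix.exists_mulVec_eq_zero_iff.mpr h
  have : ∀ i, ε * ‖v i‖ ≤ 0 := by
    intro i
    refine sdd_bound B ε hε hSDD v 0 (fun k => ?_) i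
    rw [hveq]; simp
  apply hv
  funext i
  have h1 := this i
  have h2 : 0 ≤ ‖v i‖ := norm_nonneg _
  have : ‖v i‖ = 0 := le_antisymm (by nlinarith) h2
  simpa using this

lemma sdd_inv_nonneg (B : Matrix (Fin n) (Fin n) ℝ) (ε : ℝ) (hε : 0 < ε)
    (hSDD : ∀ i, (∑ j ∈ Finset.univ.erase i, ‖B i j‖) + ε ≤ B i i)
    (hZ : ∀ i j, i ≠ j → B i j ≤ 0) :
    ∀ i j, 0 ≤ B⁻¹ i j := by
  have hunit : IsUnit B.det := isUnit_iff_ne_zero.mpr (sdd_det_ne_zero B ε hε hSDD)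
  have hBQ : B * B⁻¹ = 1 := Matrix.mul_nonsing_inv B hunit
  intro p c
  by_contra hneg
  push_neg at hneg
  set x : Fin n → ℝ := fun i => B⁻¹ i c with hx
  obtain ⟨k, -, hk⟩ := Finset.exists_min_image Finset.univ x ⟨p, Finset.mem_univ p⟩
  have hxk : x k < 0 := lt_of_le_of_lt (hk p (Finset.mem_univ p)) hneg
  have hBx : B.mulVec x k = (1 : Matrix (Fin n) (Fin n) ℝ) k c := by
    rw [← hBQ, Matrix.mul_apply]
    simp [Matrix.mulVec, dotProduct, hx]
  have h0 : 0 ≤ B.mulVec x k := by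
    rw [hBx]
    by_cases h : k = c <;> simp [Matrix.one_apply, h]
  have expand : B.mulVec x k = B k k * x k + ∑ j ∈ Finset.univ.erase k, B k j * x j := by
    rw [show B.mulVec x k = ∑ j, B k j * x j from by simp [Matrix.mulVec, dotProduct]]
    exact (Finset.add_sum_erase _ _ (Finset.mem_univ k)).symm
  have h1 : ∑ j ∈ Finset.univ.erase k, B k j * x j
      ≤ ∑ j ∈ Finset.univ.erase k, B k j * x k := by
    refine Finset.sum_le_sum fun j hj => ?_
    exact mul_le_mul_of_nonpos_left (hk j (Finset.mem_univ j))
      (hZ k j (Ne.symm (Finset.mem_erase.mp hj).1))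
  set S := ∑ j ∈ Finset.univ.erase k, ‖B k j‖ with hS
  have h2 : ∑ j ∈ Finset.univ.erase k, B k j * x k = -S * x k := by
    rw [← Finset.sum_mul]
    congr 1
    rw [hS, ← Finset.sum_neg_distrib]
    refine Finset.sum_congr rfl fun j hj => ?_
    rw [Real.norm_eq_abs, abs_of_nonpos (hZ k j (Ne.symm (Finset.mem_erase.mp hj).1))]
    ring
  have hdd : S + ε ≤ B k k := hSDD k
  nlinarith [mul_nonneg (sub_nonneg.mpr hdd) (neg_nonneg.mpr hxk.le)]

lemma sdd_inv_rowsum (B : Matrix (Fin n) (Fin n) ℝ) (ε : ℝ) (hε : 0 < ε)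
    (hSDD : ∀ i, (∑ j ∈ Finset.univ.erase i, ‖B i j‖) + ε ≤ B i i)
    (hZ : ∀ i j, i ≠ j → B i j ≤ 0) (i : Fin n) :
    ∑ j, ‖B⁻¹ i j‖ ≤ ε⁻¹ := by
  have hunit : IsUnit B.det := isUnit_iff_ne_zero.mpr (sdd_det_ne_zero B ε hε hSDD)
  have hBQ : B * B⁻¹ = 1 := Matrix.mul_nonsing_inv B hunit
  set x : Fin n → ℝ := B⁻¹.mulVec (fun _ => 1) with hx
  have hBx : B.mulVec x = fun _ => 1 := by
    rw [hx, Matrix.mulVec_mulVec, hBQ, Matrix.one_mulVec]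
  have hb : ∀ k, ‖B.mulVec x k‖ ≤ 1 := by intro k; rw [hBx]; simp
  have hxi : ε * ‖x i‖ ≤ 1 := sdd_bound B ε hε hSDD x 1 hb i
  have hxi' : ‖x i‖ ≤ ε⁻¹ := by
    rw [← one_mul ‖x i‖, show (1:ℝ) = ε⁻¹ * ε by field_simp, mul_assoc]
    calc ε⁻¹ * (ε * ‖x i‖) ≤ ε⁻¹ * 1 := by
          exact mul_le_mul_of_nonneg_left hxi (inv_nonneg.mpr hε.le)
      _ = ε⁻¹ := mul_one _
  have hsum : ∑ j, ‖B⁻¹ i j‖ = x i := by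
    rw [hx]
    simp only [Matrix.mulVec, dotProduct, mul_one]
    exact Finset.sum_congr rfl fun j _ => by
      rw [Real.norm_eq_abs, abs_of_nonneg (sdd_inv_nonneg B ε hε hSDD hZ i j)]
  rw [hsum]
  exact le_trans (le_abs_self _) (by rw [← Real.norm_eq_abs]; exact hxi')

end SDD

theorem stmt12 {n : ℕ} (hn : 2 ≤ n) (M : Matrix (Fin n) (Fin n) ℝ)
    (hBN : IsBNekrasov M)
    (d : Fin n → ℝ) (hd : ∀ i, 0 ≤ d i ∧ d i ≤ 1) :
    IsUnit (1 - Matrix.diagonal d + Matrix.diagonal d * M).det ∧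
      linftyNorm (1 - Matrix.diagonal d + Matrix.diagonal d * M)⁻¹ ≤
        Finset.univ.sup' ⟨⟨0, by omega⟩, Finset.mem_univ _⟩
          (fun i => (n - 1 : ℝ) * nekEta (BPlus M) i /
            min (BPlus M i i - nekH (BPlus M) i) 1) := by
  obtain ⟨hNekM, hbdpos⟩ := hBN
  have hnem : Nonempty (Fin n) := ⟨⟨0, by omega⟩⟩
  set b : Matrix (Fin n) (Fin n) ℝ := BPlus M with hbdef
  set r : Fin n → ℝ := rPlus M with hrdef
  have hr0 : ∀ i, 0 ≤ r i := fun i => (Finset.le_fold_max 0).mpr (Or.inl le_rfl)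
  have hboff : ∀ i j, i ≠ j → b i j ≤ 0 := by
    intro i j hij
    have h1 : M i j ≤ r i := (Finset.le_fold_max (M i j)).mpr
      (Or.inr ⟨j, Finset.mem_erase.mpr ⟨hij.symm, Finset.mem_univ j⟩, le_rfl⟩)
    simpa [hbdef, BPlus, hrdef] using sub_nonpos.mpr h1
  have hbM : ∀ i j, M i j = b i j + r i := by intro i j; simp [hbdef, BPlus, hrdef]
  have hbd : ∀ i, 0 < b i i := hbdpos
  have hbNek : ∀ i, nekH b i < b i i := by
    intro i
    have := hNekM i
    rwa [Real.norm_eq_abs, abs_of_pos (hbd i)] at this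
  set A : Matrix (Fin n) (Fin n) ℝ := ADM b d with hAdef
  have hL1 : ∀ i, nekH A i ≤ d i * nekH b i := by
    intro i; have := nekH_ADM_le b d hd hbd i; rwa [← hAdef] at this
  have hL2 : ∀ i, nekZ A i ≤ nekEta b i := by
    intro i; have := nekZ_ADM_le b d hd hbd i; rwa [← hAdef] at this
  have hgap : ∀ i, min (b i i - nekH b i) 1 ≤ A i i - nekH A i := by
    intro i; have := gap_ADM b d hd hbd hbNek i; rwa [← hAdef] at this
  have hApos : ∀ i, 0 < A i i := by
    intro i; have := ADM_diag_pos b d hd hbd i; rwa [← hAdef] at this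
  have hδpos : ∀ i, (0:ℝ) < min (b i i - nekH b i) 1 :=
    fun i => lt_min (sub_pos.mpr (hbNek i)) zero_lt_one
  have H0 : (Finset.univ : Finset (Fin n)).Nonempty := ⟨⟨0, by omega⟩, Finset.mem_univ _⟩
  set K := Finset.univ.sup' H0 (fun i => nekEta b i / min (b i i - nekH b i) 1) with hKdef
  have hKge : ∀ i, nekEta b i / min (b i i - nekH b i) 1 ≤ K := by
    intro i
    rw [hKdef]
    exact Finset.le_sup' (fun i => nekEta b i / min (b i i - nekH b i) 1) (Finset.mem_univ i)
  have hKpos : 0 < K := by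
    refine lt_of_lt_of_le ?_ (hKge ⟨0, by omega⟩)
    exact div_pos (lt_of_lt_of_le one_pos (one_le_nekEta b _)) (hδpos _)
  set ε := K⁻¹ with hεdef
  have hεpos : 0 < ε := inv_pos.mpr hKpos
  have hεη : ∀ i, ε * nekEta b i ≤ min (b i i - nekH b i) 1 := by
    intro i
    have h1 : nekEta b i ≤ K * min (b i i - nekH b i) 1 := (div_le_iff₀ (hδpos i)).mp (hKge i)
    calc ε * nekEta b i ≤ ε * (K * min (b i i - nekH b i) 1) :=
          mul_le_mul_of_nonneg_left h1 hεpos.le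
      _ = min (b i i - nekH b i) 1 := by
          rw [hεdef, inv_mul_cancel_left₀ hKpos.ne']
  set w : Fin n → ℝ := fun j => (nekH A j + ε * nekZ A j) / A j j with hwdef
  have hw0 : ∀ j, 0 < w j := by
    intro j
    exact div_pos (add_pos_of_nonneg_of_pos (nekH_nonneg A j)
      (mul_pos hεpos (lt_of_lt_of_le one_pos (one_le_nekZ A j)))) (hApos j)
  have hw1 : ∀ j, w j ≤ 1 := by
    intro j
    rw [hwdef]
    rw [div_le_one (hApos j)]
    have h1 : ε * nekZ A j ≤ ε * nekEta b j := mul_le_mul_of_nonneg_left (hL2 j) hεpos.le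
    have h2 := hεη j
    have h3 := hgap j
    linarith
  set B' := A * Matrix.diagonal w with hB'def
  have hB'entry : ∀ i j, B' i j = A i j * w j := fun i j => Matrix.mul_diagonal w A i j
  have hB'diag : ∀ i, B' i i = nekH A i + ε * nekZ A i := by
    intro i
    rw [hB'entry i i, hwdef, mul_comm, div_mul_cancel₀ _ (hApos i).ne']
  have hsplit : ∀ (i : Fin n) (g : Fin n → ℝ), ∑ j ∈ Finset.univ.erase i, g j
      = (∑ j, if j < i then g j else 0) + ∑ j, if i < j then g j else 0 := by
    intro i g
    have e1 : ∀ j : Fin n, (if j < i then g j else 0) + (if i < j then g j else 0)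
        = g j - (if j = i then g j else 0) := by
      intro j
      rcases lt_trichotomy j i with h | h | h
      · simp [h, h.ne, asymm h]
      · simp [h]
      · simp [h, h.ne', asymm h]
    calc ∑ j ∈ Finset.univ.erase i, g j = (∑ j, g j) - g i :=
          Finset.sum_erase_eq_sub (Finset.mem_univ i)
      _ = ∑ j, (g j - if j = i then g j else 0) := by
          rw [Finset.sum_sub_distrib, Finset.sum_ite_eq' Finset.univ i g,
            if_pos (Finset.mem_univ i)]
      _ = ∑ j, ((if j < i then g j else 0) + (if i < j then g j else 0)) :=
          Finset.sum_congr rfl fun j _ => (e1 j).symm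
      _ = _ := Finset.sum_add_distrib
  have hSDD : ∀ i, (∑ j ∈ Finset.univ.erase i, ‖B' i j‖) + ε ≤ B' i i := by
    intro i
    rw [hsplit i]
    have hH : nekH A i = (∑ j, if j < i then ‖A i j‖ / ‖A j j‖ * nekH A j else 0)
        + ∑ j, (if i < j then ‖A i j‖ else 0) := by
      rw [nekH]
      simp only [dite_eq_ite]
    have hZd : nekZ A i = (∑ j, if j < i then ‖A i j‖ / ‖A j j‖ * nekZ A j else 0) + 1 := by
      rw [nekZ]
      simp only [dite_eq_ite]
    have hlt : ∑ j, (if j < i then ‖B' i j‖ else 0)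
        = (∑ j, if j < i then ‖A i j‖ / ‖A j j‖ * nekH A j else 0)
          + ε * ∑ j, (if j < i then ‖A i j‖ / ‖A j j‖ * nekZ A j else 0) := by
      rw [Finset.mul_sum, ← Finset.sum_add_distrib]
      refine Finset.sum_congr rfl fun j _ => ?_
      by_cases hj : j < i
      · simp only [hj, if_true, mul_ite, mul_zero]
        rw [hB'entry i j, hwdef]
        have hAjj : ‖A j j‖ = A j j := by
          rw [Real.norm_eq_abs, abs_of_pos (hApos j)]
        rw [Real.norm_eq_abs (A i j * ((nekH A j + ε * nekZ A j) / A j j)), abs_mul,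
          abs_of_pos (show (0:ℝ) < (nekH A j + ε * nekZ A j) / A j j from hw0 j), hAjj,
          ← Real.norm_eq_abs (A i j)]
        field_simp
      · simp [hj]
    have hgt : ∑ j, (if i < j then ‖B' i j‖ else 0) ≤ ∑ j, (if i < j then ‖A i j‖ else 0) := by
      refine Finset.sum_le_sum fun j _ => ?_
      by_cases hj : i < j
      · simp only [hj, if_true]
        rw [hB'entry i j, Real.norm_eq_abs, abs_mul, abs_of_pos (hw0 j), ← Real.norm_eq_abs]
        exact mul_le_of_le_one_right (norm_nonneg _) (hw1 j)
      · simp [hj]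
    rw [hB'diag i]
    have hZd' : ε * nekZ A i
        = ε * (∑ j, if j < i then ‖A i j‖ / ‖A j j‖ * nekZ A j else 0) + ε := by
      rw [hZd]; ring
    linarith [hlt, hH, hZd', hgt]
  have hZB' : ∀ i j, i ≠ j → B' i j ≤ 0 := by
    intro i j hij
    have h1 : A i j ≤ 0 := by
      rw [hAdef, ADM_off b d hij]
      exact mul_nonpos_iff.mpr (Or.inl ⟨(hd i).1, hboff i j hij⟩)
    have := mul_le_mul_of_nonneg_right h1 (hw0 j).le
    rw [zero_mul] at this
    rw [hB'entry i j]
    exact this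
  have hdet := sdd_det_ne_zero B' ε hεpos hSDD
  have hQnn := sdd_inv_nonneg B' ε hεpos hSDD hZB'
  have hQrow' := sdd_inv_rowsum B' ε hεpos hSDD hZB'
  have hQrow : ∀ i, ∑ j, ‖B'⁻¹ i j‖ ≤ K := by
    intro i
    have := hQrow' i
    rwa [hεdef, inv_inv] at this
  have hunitB' : IsUnit B'.det := isUnit_iff_ne_zero.mpr hdet
  have hB'inv : B' * B'⁻¹ = 1 := Matrix.mul_nonsing_inv _ hunitB'
  set Ainv := Matrix.diagonal w * B'⁻¹ with hAinvdef
  have hAAinv : A * Ainv = 1 := by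
    rw [hAinvdef, ← Matrix.mul_assoc, ← hB'def, hB'inv]
  have hAinvE : ∀ i j, Ainv i j = w i * B'⁻¹ i j := fun i j =>
    Matrix.diagonal_mul w B'⁻¹ i j
  have hAinvnn : ∀ i j, 0 ≤ Ainv i j := fun i j => by
    rw [hAinvE]; exact mul_nonneg (hw0 i).le (hQnn i j)
  have hAinvRow : ∀ i, ∑ j, ‖Ainv i j‖ ≤ K := by
    intro i
    calc ∑ j, ‖Ainv i j‖ = ∑ j, w i * ‖B'⁻¹ i j‖ := by
          refine Finset.sum_congr rfl fun j _ => ?_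
          rw [hAinvE, Real.norm_eq_abs, abs_mul, abs_of_pos (hw0 i), Real.norm_eq_abs]
      _ ≤ ∑ j, ‖B'⁻¹ i j‖ := by
          refine Finset.sum_le_sum fun j _ => ?_
          exact mul_le_of_le_one_left (norm_nonneg _) (hw1 i)
      _ ≤ K := hQrow i
  set u := Ainv.mulVec (fun i => d i * r i) with hudef
  have hu0 : ∀ i, 0 ≤ u i := by
    intro i
    rw [hudef]
    simp only [Matrix.mulVec, dotProduct]
    exact Finset.sum_nonneg fun j _ =>
      mul_nonneg (hAinvnn i j) (mul_nonneg (hd j).1 (hr0 j))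
  set s := ∑ i, u i with hsdef
  have hs0 : 0 ≤ s := Finset.sum_nonneg fun i _ => hu0 i
  have hs1 : (0:ℝ) < 1 + s := by linarith
  set c0 := (1 + s)⁻¹ with hc0def
  set E : Matrix (Fin n) (Fin n) ℝ := Matrix.of (fun i _ => u i) with hEdef
  have hAu : A.mulVec u = fun i => d i * r i := by
    rw [hudef, Matrix.mulVec_mulVec, hAAinv, Matrix.one_mulVec]
  have hME : (1 - Matrix.diagonal d + Matrix.diagonal d * M) = A * (1 + E) := by
    ext i j
    rw [Matrix.mul_add, Matrix.mul_one, Matrix.add_apply, Matrix.add_apply]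
    have hAE : (A * E) i j = d i * r i := by
      rw [Matrix.mul_apply]
      have e : ∑ k, A i k * E k j = A.mulVec u i := by
        simp [Matrix.mulVec, dotProduct, hEdef]
      rw [e, hAu]
    rw [hAE]
    by_cases h : i = j
    · subst h
      simp only [Matrix.add_apply, Matrix.sub_apply, Matrix.one_apply_eq,
        Matrix.diagonal_apply_eq, Matrix.diagonal_mul, hAdef, ADM, Matrix.of_apply, if_pos rfl]
      rw [hbM i i]
      simp only [if_true]
      ring
    · simp only [Matrix.add_apply, Matrix.sub_apply, Matrix.one_apply_ne h,
        Matrix.diagonal_apply_ne _ h, Matrix.diagonal_mul, hAdef, ADM, Matrix.of_apply,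
        if_neg h]
      rw [hbM i j]
      ring
  have hEE : E * E = s • E := by
    ext i j
    simp only [Matrix.mul_apply, hEdef, Matrix.of_apply, Matrix.smul_apply, smul_eq_mul]
    rw [← Finset.mul_sum, ← hsdef]
    ring
  have hinvE : (1 + E) * (1 - c0 • E) = 1 := by
    have h1 : E * (c0 • E) = (c0 * s) • E := by
      rw [Matrix.mul_smul, hEE, smul_smul, mul_comm]
    rw [add_mul, one_mul, mul_sub, mul_one, h1]
    have h2 : (1 : Matrix (Fin n) (Fin n) ℝ) - c0 • E + (E - (c0 * s) • E)
        = 1 + ((1 - c0 - c0 * s) • E) := by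
      rw [sub_smul, sub_smul, one_smul]
      abel
    rw [h2]
    have hz : (1:ℝ) - c0 - c0 * s = 0 := by
      rw [hc0def]
      field_simp
      ring
    rw [hz, zero_smul, add_zero]
  set G := (1 : Matrix (Fin n) (Fin n) ℝ) - c0 • E with hGdef
  have hright : (1 - Matrix.diagonal d + Matrix.diagonal d * M) * (G * Ainv) = 1 := by
    rw [hME, Matrix.mul_assoc, ← Matrix.mul_assoc (1 + E) G Ainv, hGdef, hinvE, Matrix.one_mul,
      hAAinv]
  constructor
  · exact Matrix.isUnit_det_of_right_inverse hright
  · have hMinv : (1 - Matrix.diagonal d + Matrix.diagonal d * M)⁻¹ = G * Ainv :=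
      Matrix.inv_eq_right_inv hright
    rw [hMinv]
    have hcu : ∀ i, 0 ≤ c0 * u i ∧ c0 * u i ≤ 1 := by
      intro i
      have hc0nn : (0:ℝ) ≤ c0 := by rw [hc0def]; exact (inv_pos.mpr hs1).le
      constructor
      · exact mul_nonneg hc0nn (hu0 i)
      · have h2 : u i ≤ 1 + s := by
          have := Finset.single_le_sum (fun j _ => hu0 j) (Finset.mem_univ i)
          rw [← hsdef] at this
          linarith
        calc c0 * u i ≤ c0 * (1 + s) := mul_le_mul_of_nonneg_left h2 hc0nn
          _ = 1 := by rw [hc0def, inv_mul_cancel₀ hs1.ne']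
    have hGentry : ∀ i j, G i j = (if i = j then (1:ℝ) else 0) - c0 * u i := by
      intro i j
      rw [hGdef]
      simp [Matrix.sub_apply, Matrix.one_apply, Matrix.smul_apply, hEdef]
    have hGrow : ∀ i, ∑ j, ‖G i j‖ ≤ (n:ℝ) - 1 := by
      intro i
      rw [← Finset.add_sum_erase _ _ (Finset.mem_univ i)]
      have h1 : ‖G i i‖ = 1 - c0 * u i := by
        rw [hGentry i i, if_pos rfl, Real.norm_eq_abs,
          abs_of_nonneg (by linarith [(hcu i).2])]
      have h2 : ∑ j ∈ Finset.univ.erase i, ‖G i j‖ = ((n:ℝ) - 1) * (c0 * u i) := by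
        rw [Finset.sum_congr rfl (fun j hj => show ‖G i j‖ = c0 * u i by
          rw [hGentry i j, if_neg (Ne.symm (Finset.mem_erase.mp hj).1), zero_sub,
            Real.norm_eq_abs, abs_neg, abs_of_nonneg (hcu i).1])]
        rw [Finset.sum_const, Finset.card_erase_of_mem (Finset.mem_univ i),
          Finset.card_univ, Fintype.card_fin, nsmul_eq_mul,
          Nat.cast_sub (by omega : 1 ≤ n), Nat.cast_one]
      rw [h1, h2]
      have hn2 : (2:ℝ) ≤ n := by exact_mod_cast hn
      nlinarith [(hcu i).1, (hcu i).2]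
    have hGA : ∀ i, ∑ j, ‖(G * Ainv) i j‖ ≤ ((n:ℝ) - 1) * K := by
      intro i
      calc ∑ j, ‖(G * Ainv) i j‖ ≤ ∑ j, ∑ k, ‖G i k‖ * ‖Ainv k j‖ := by
            refine Finset.sum_le_sum fun j _ => ?_
            rw [Matrix.mul_apply]
            refine le_trans (norm_sum_le _ _) ?_
            refine Finset.sum_le_sum fun k _ => ?_
            rw [Real.norm_eq_abs, abs_mul, Real.norm_eq_abs, Real.norm_eq_abs]
        _ = ∑ k, ‖G i k‖ * ∑ j, ‖Ainv k j‖ := by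
            rw [Finset.sum_comm]
            exact Finset.sum_congr rfl fun k _ => (Finset.mul_sum _ _ _).symm
        _ ≤ ∑ k, ‖G i k‖ * K := Finset.sum_le_sum fun k _ =>
            mul_le_mul_of_nonneg_left (hAinvRow k) (norm_nonneg _)
        _ = (∑ k, ‖G i k‖) * K := (Finset.sum_mul _ _ _).symm
        _ ≤ ((n:ℝ) - 1) * K := mul_le_mul_of_nonneg_right (hGrow i) hKpos.le
    have hlinf : linftyNorm (G * Ainv) ≤ ((n:ℝ) - 1) * K := ciSup_le hGA
    refine le_trans hlinf ?_
    obtain ⟨i0, -, hi0⟩ := Finset.exists_mem_eq_sup' H0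
      (fun i => nekEta b i / min (b i i - nekH b i) 1)
    have hKeq : ((n:ℝ) - 1) * K
        = (n - 1 : ℝ) * nekEta b i0 / min (b i0 i0 - nekH b i0) 1 := by
      rw [hKdef, hi0, mul_div_assoc]
    rw [hKeq]
    exact Finset.le_sup'
      (fun i => (n - 1 : ℝ) * nekEta b i / min (b i i - nekH b i) 1) (Finset.mem_univ i0)
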